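/- There are no feasible tuples of type (n,m) if n ≡ 0 (mod 4) and m ≡ 2 (mod 4). -/

import Mathlib

/-- The `k`-th partial alternating sum `L_{k+1} = ∑_{i=0}^{k} (-1)^i (x_i + 1)`
(0-indexed version of `L_k = ∑_{i=1}^k (-1)^{i+1}(x_i+1)`). -/
def altL {n : ℕ} (x : Fin n → ℕ) (k : Fin n) : ℤ :=
  ∑ i ∈ Finset.Iic k, (-1 : ℤ) ^ (i : ℕ) * ((x i : ℤ) + 1)

/-- A tuple `(x₁,…,xₙ)` of nonnegative integers is feasible of type `(n,m)` if `n` is even,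
`∑ xᵢ = m`, the alternating sum `∑ (-1)^{i+1} xᵢ` is divisible by `n`, and the partial
alternating sums `L₁,…,Lₙ` form a complete residue system modulo `n`. -/
def Feasible (n m : ℕ) (x : Fin n → ℕ) : Prop :=
  Even n ∧
  (∑ i, x i) = m ∧
  (n : ℤ) ∣ (∑ i : Fin n, (-1 : ℤ) ^ (i : ℕ) * (x i : ℤ)) ∧
  Function.Injective fun k : Fin n => (altL x k : ZMod n)

/-- There are no feasible tuples of type `(n,m)` if `n ≡ 0 (mod 4)` and `m ≡ 2 (mod 4)`. -/
theorem no_feasible_of_mod_four (n m : ℕ) (hn : 0 < n) (hn4 : n % 4 = 0) (hm4 : m % 4 = 2)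
    (x : Fin n → ℕ) : ¬ Feasible n m x := by
  rintro ⟨-, hsum, hdvd, hinj⟩
  haveI : NeZero n := ⟨hn.ne'⟩
  have h2n : (2 : ℕ) ∣ n := by omega
  set φ : ZMod n →+* ZMod 2 := ZMod.castHom h2n (ZMod 2) with hφ
  -- the map k ↦ altL x k mod n is bijective
  have hg : Function.Bijective fun k : Fin n => ((altL x k : ℤ) : ZMod n) :=
    (Fintype.bijective_iff_injective_and_card _).2 ⟨hinj, by simp [ZMod.card]⟩
  -- the map i ↦ (i : ZMod n) is bijective
  have he : Function.Bijective fun i : Fin n => ((i : ℕ) : ZMod n) := by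
    refine (Fintype.bijective_iff_injective_and_card _).2 ⟨?_, by simp [ZMod.card]⟩
    intro a b hab
    have hab' : (((a : ℕ)) : ZMod n) = ((b : ℕ) : ZMod n) := hab
    exact Fin.ext (by rw [← ZMod.val_cast_of_lt a.2, ← ZMod.val_cast_of_lt b.2, hab'])
  -- main equation in ZMod 2
  have E : ∑ k : Fin n, ((altL x k : ℤ) : ZMod 2) = ∑ i : Fin n, ((i : ℕ) : ZMod 2) := by
    have h1 : ∑ k : Fin n, φ ((altL x k : ℤ) : ZMod n) = ∑ z : ZMod n, φ z :=
      Fintype.sum_bijective _ hg _ φ fun _ => rfl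
    have h2 : ∑ i : Fin n, φ (((i : ℕ) : ZMod n)) = ∑ z : ZMod n, φ z :=
      Fintype.sum_bijective _ he _ φ fun _ => rfl
    have h3 := h1.trans h2.symm
    simpa [map_intCast, map_natCast] using h3
  -- compute LHS of E
  have neg_one : (-1 : ZMod 2) = 1 := rfl
  have LHS : ∑ k : Fin n, ((altL x k : ℤ) : ZMod 2)
      = ∑ i : Fin n, ((i : ℕ) : ZMod 2) * ((x i : ZMod 2) + 1) := by
    have step1 : ∀ k : Fin n, ((altL x k : ℤ) : ZMod 2)
        = ∑ i ∈ Finset.Iic k, ((x i : ZMod 2) + 1) := by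
      intro k
      rw [altL]
      push_cast
      refine Finset.sum_congr rfl fun i _ => ?_
      rw [neg_one, one_pow, one_mul]
    calc ∑ k : Fin n, ((altL x k : ℤ) : ZMod 2)
        = ∑ k : Fin n, ∑ i ∈ Finset.Iic k, ((x i : ZMod 2) + 1) := by
          exact Finset.sum_congr rfl fun k _ => step1 k
      _ = ∑ i : Fin n, (Finset.Ici i).card • ((x i : ZMod 2) + 1) := by
          rw [Finset.sum_comm' (s' := fun i : Fin n => Finset.Ici i) (t' := Finset.univ) ?_]
          · refine Finset.sum_congr rfl fun i _ => ?_
            rw [Finset.sum_const]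
          · intro k i
            simp only [Finset.mem_univ, true_and, Finset.mem_Iic, Finset.mem_Ici, and_true]
      _ = ∑ i : Fin n, ((i : ℕ) : ZMod 2) * ((x i : ZMod 2) + 1) := by
          refine Finset.sum_congr rfl fun i _ => ?_
          rw [Fin.card_Ici, nsmul_eq_mul]
          congr 1
          have hle : (i : ℕ) ≤ n := i.2.le
          have : ((n - (i : ℕ) : ℕ) : ZMod 2) + ((i : ℕ) : ZMod 2) = ((n : ℕ) : ZMod 2) := by
            rw [← Nat.cast_add, Nat.sub_add_cancel hle]
          have hn0 : ((n : ℕ) : ZMod 2) = 0 := (ZMod.natCast_eq_zero_iff n 2).2 h2n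
          rw [hn0] at this
          have := eq_neg_of_add_eq_zero_left this
          rw [this]
          exact (CharTwo.neg_eq _)
  -- deduce parity of odd-index sum
  have hO2 : ∑ i : Fin n, ((i : ℕ) : ZMod 2) * (x i : ZMod 2) = 0 := by
    have : ∑ i : Fin n, ((i : ℕ) : ZMod 2) * ((x i : ZMod 2) + 1)
        = ∑ i : Fin n, (((i : ℕ) : ZMod 2) * (x i : ZMod 2) + ((i : ℕ) : ZMod 2)) := by
      refine Finset.sum_congr rfl fun i _ => by ring
    rw [LHS, this, Finset.sum_add_distrib] at E
    rwa [add_eq_right] at E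
  -- O : the sum over odd indices
  set O : ℕ := ∑ i : Fin n, (i : ℕ) % 2 * x i with hOdef
  have h2O : 2 ∣ O := by
    have : ((O : ℕ) : ZMod 2) = 0 := by
      rw [hOdef]
      push_cast
      rw [← hO2]
      refine Finset.sum_congr rfl fun i _ => ?_
      congr 1
      exact ZMod.natCast_mod (i : ℕ) 2
    exact (ZMod.natCast_eq_zero_iff O 2).1 this
  -- integer identity: m = S + 2*O
  have hid : (m : ℤ) = (∑ i : Fin n, (-1 : ℤ) ^ (i : ℕ) * (x i : ℤ)) + 2 * (O : ℤ) := by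
    rw [← hsum, hOdef, Nat.cast_sum, Nat.cast_sum, Finset.mul_sum, ← Finset.sum_add_distrib]
    refine Finset.sum_congr rfl fun i _ => ?_
    rcases Nat.even_or_odd (i : ℕ) with hev | hod
    · rw [hev.neg_one_pow, Nat.even_iff.1 hev]
      push_cast
      ring
    · rw [hod.neg_one_pow, Nat.odd_iff.1 hod]
      push_cast
      ring
  -- conclude
  have h4S : (4 : ℤ) ∣ (∑ i : Fin n, (-1 : ℤ) ^ (i : ℕ) * (x i : ℤ)) := by
    refine dvd_trans ?_ hdvd
    exact_mod_cast (Int.natCast_dvd_natCast.2 (by omega : (4:ℕ) ∣ n))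
  have h4m : (4 : ℤ) ∣ (m : ℤ) := by
    rw [hid]
    obtain ⟨a, ha⟩ := h4S
    obtain ⟨b, hb⟩ := h2O
    refine ⟨a + (b : ℤ), ?_⟩
    rw [ha, hb]
    push_cast
    ring
  have : (4 : ℕ) ∣ m := by exact_mod_cast h4m
  omega
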